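/- For every prime p > 3, ∑_{k=1}^{p-1} k H_k² ≡ −(5/4) p + 1 (mod p²), as rationals with denominators coprime to p. -/

import Mathlib

open Finset

/-- Harmonic number `H n = ∑_{j=1}^n 1/j`. -/
def H (n : ℕ) : ℚ := ∑ j ∈ Finset.Icc 1 n, (1 : ℚ) / j

/-- Generalized harmonic number `H_n^{(α)} = ∑_{i=1}^n 1/i^α`. -/
def Hgen (n α : ℕ) : ℚ := ∑ i ∈ Finset.Icc 1 n, (1 : ℚ) / (i : ℚ) ^ α

/-- `S m = ∑_{r=0}^m C(m+1,r) B_r B_{m-r}`. -/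
def S (m : ℕ) : ℚ := ∑ r ∈ Finset.range (m + 1),
  ((m + 1).choose r : ℚ) * bernoulli r * bernoulli (m - r)

/-- p-integrality predicate: x has a denominator coprime to p. -/
def PIQ (p : ℕ) (x : ℚ) : Prop := ∃ a b : ℤ, ¬ (p : ℤ) ∣ b ∧ x * b = a

/-- x is p-integral and divisible by p. -/
def PD (p : ℕ) (x : ℚ) : Prop := ∃ a b : ℤ, ¬ (p : ℤ) ∣ b ∧ x * b = p * a

lemma not_dvd_one {p : ℕ} (hp : 2 ≤ p) : ¬ (p : ℤ) ∣ 1 := by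
  intro h
  have := Int.le_of_dvd one_pos h
  omega

lemma piq_intcast {p : ℕ} (hp : 2 ≤ p) (z : ℤ) : PIQ p (z : ℚ) :=
  ⟨z, 1, not_dvd_one hp, by simp⟩

lemma dvd_mul_split {p : ℕ} (hp : p.Prime) {b1 b2 : ℤ} (h1 : ¬ (p : ℤ) ∣ b1)
    (h2 : ¬ (p : ℤ) ∣ b2) : ¬ (p : ℤ) ∣ b1 * b2 := by
  intro h
  rcases (Nat.prime_iff_prime_int.mp hp).dvd_mul.mp h with h | h
  · exact h1 h
  · exact h2 h

lemma piq_add {p : ℕ} (hp : p.Prime) {x y : ℚ} (hx : PIQ p x) (hy : PIQ p y) :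
    PIQ p (x + y) := by
  obtain ⟨a1, b1, hb1, h1⟩ := hx
  obtain ⟨a2, b2, hb2, h2⟩ := hy
  refine ⟨a1 * b2 + a2 * b1, b1 * b2, dvd_mul_split hp hb1 hb2, ?_⟩
  push_cast
  calc (x + y) * ((b1 : ℚ) * b2) = (x * b1) * b2 + (y * b2) * b1 := by ring
  _ = (a1 : ℚ) * b2 + (a2 : ℚ) * b1 := by rw [h1, h2]

lemma piq_mul {p : ℕ} (hp : p.Prime) {x y : ℚ} (hx : PIQ p x) (hy : PIQ p y) :
    PIQ p (x * y) := by
  obtain ⟨a1, b1, hb1, h1⟩ := hx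
  obtain ⟨a2, b2, hb2, h2⟩ := hy
  refine ⟨a1 * a2, b1 * b2, dvd_mul_split hp hb1 hb2, ?_⟩
  push_cast
  calc (x * y) * ((b1 : ℚ) * b2) = (x * b1) * (y * b2) := by ring
  _ = (a1 : ℚ) * (a2 : ℚ) := by rw [h1, h2]

lemma piq_inv_nat {p : ℕ} (m : ℕ) (hm : ¬ p ∣ m) : PIQ p (1 / (m : ℚ)) := by
  have hm0 : m ≠ 0 := by rintro rfl; exact hm (dvd_zero p)
  refine ⟨1, m, ?_, ?_⟩
  · intro h
    exact hm (Int.ofNat_dvd.mp h)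
  · have : (m : ℚ) ≠ 0 := Nat.cast_ne_zero.mpr hm0
    field_simp
    simp

lemma piq_sum {p : ℕ} (hp : p.Prime) {ι : Type*} (s : Finset ι) (f : ι → ℚ)
    (h : ∀ i ∈ s, PIQ p (f i)) : PIQ p (∑ i ∈ s, f i) := by
  classical
  induction s using Finset.induction_on with
  | empty => exact ⟨0, 1, not_dvd_one hp.two_le, by simp⟩
  | insert _ _ hns ih =>
    rw [Finset.sum_insert hns]
    exact piq_add hp (h _ (Finset.mem_insert_self _ _))
      (ih fun i hi => h i (Finset.mem_insert_of_mem hi))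

lemma pd_add {p : ℕ} (hp : p.Prime) {x y : ℚ} (hx : PD p x) (hy : PD p y) :
    PD p (x + y) := by
  obtain ⟨a1, b1, hb1, h1⟩ := hx
  obtain ⟨a2, b2, hb2, h2⟩ := hy
  refine ⟨a1 * b2 + a2 * b1, b1 * b2, dvd_mul_split hp hb1 hb2, ?_⟩
  push_cast
  calc (x + y) * ((b1 : ℚ) * b2) = (x * b1) * b2 + (y * b2) * b1 := by ring
  _ = (p : ℚ) * a1 * b2 + (p : ℚ) * a2 * b1 := by rw [h1, h2]
  _ = (p : ℚ) * ((a1 : ℚ) * b2 + (a2 : ℚ) * b1) := by ring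

lemma pd_sub {p : ℕ} (hp : p.Prime) {x y : ℚ} (hx : PD p x) (hy : PD p y) :
    PD p (x - y) := by
  obtain ⟨a2, b2, hb2, h2⟩ := hy
  have : PD p (-y) := ⟨-a2, b2, hb2, by push_cast; rw [neg_mul, h2]; ring⟩
  simpa [sub_eq_add_neg] using pd_add hp hx this

lemma pd_sum {p : ℕ} (hp : p.Prime) {ι : Type*} (s : Finset ι) (f : ι → ℚ)
    (h : ∀ i ∈ s, PD p (f i)) : PD p (∑ i ∈ s, f i) := by
  classical
  induction s using Finset.induction_on with
  | empty => exact ⟨0, 1, not_dvd_one hp.two_le, by simp⟩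
  | insert _ _ hns ih =>
    rw [Finset.sum_insert hns]
    exact pd_add hp (h _ (Finset.mem_insert_self _ _))
      (ih fun i hi => h i (Finset.mem_insert_of_mem hi))

lemma pd_of_piq_mul {p : ℕ} {x : ℚ} (hx : PIQ p x) : PD p ((p : ℚ) * x) := by
  obtain ⟨a, b, hb, h⟩ := hx
  exact ⟨a, b, hb, by rw [mul_assoc, h]⟩

lemma H_succ (n : ℕ) : H (n + 1) = H n + 1 / (n + 1 : ℚ) := by
  rw [H, H, Finset.sum_Icc_succ_top (by omega : 1 ≤ n + 1)]
  push_cast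
  ring

/-- Closed form for ∑ k H_k². -/
lemma T_closed (n : ℕ) :
    ∑ k ∈ Finset.Icc 1 n, (k : ℚ) * H k ^ 2 =
      ((n : ℚ) * (n + 1) / 2) * H n ^ 2 + ((-(n : ℚ) ^ 2 + n + 1) / 2) * H n
        + ((n : ℚ) ^ 2 - 3 * n) / 4 := by
  induction n with
  | zero => simp [H]
  | succ n ih =>
    rw [Finset.sum_Icc_succ_top (by omega : 1 ≤ n + 1), ih, H_succ]
    have hn : (n : ℚ) + 1 ≠ 0 := by positivity
    push_cast
    field_simp
    ring

/-- Closed form for ∑ k². -/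
lemma sq_sum (n : ℕ) :
    ∑ k ∈ Finset.Icc 1 n, (k : ℚ) ^ 2 = (n : ℚ) * (n + 1) * (2 * n + 1) / 6 := by
  induction n with
  | zero => simp
  | succ n ih =>
    rw [Finset.sum_Icc_succ_top (by omega : 1 ≤ n + 1), ih]
    push_cast
    ring

theorem stmt13 (p : ℕ) (hp : p.Prime) (hp3 : 3 < p) :
    (p : ℤ) ^ 2 ∣ ((∑ k ∈ Finset.Icc 1 (p - 1), (k : ℚ) * H k ^ 2)
      - (-(5 / 4) * (p : ℚ) + 1)).num := by
  haveI := Fact.mk hp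
  have hp2 : 2 ≤ p := by omega
  set q : ℚ := (p : ℚ) with hqdef
  have hq1 : ((p - 1 : ℕ) : ℚ) = q - 1 := by
    have h1 : (1 : ℕ) ≤ p := by omega
    push_cast [Nat.cast_sub h1]
    ring
  -- the pairing sum
  set Q : ℚ := ∑ k ∈ Finset.Icc 1 (p - 1), 1 / ((k * (p - k) : ℕ) : ℚ) with hQdef
  -- reflection identity for the harmonic sum
  have hrev : ∑ k ∈ Finset.Icc 1 (p - 1), (1 : ℚ) / ((p - k : ℕ) : ℚ)
      = H (p - 1) := by
    rw [H]
    refine Finset.sum_nbij' (fun k => p - k) (fun k => p - k) ?_ ?_ ?_ ?_ ?_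
    · intro a ha; simp only [Finset.mem_Icc] at *; omega
    · intro a ha; simp only [Finset.mem_Icc] at *; omega
    · intro a ha; simp only [Finset.mem_Icc] at *; omega
    · intro a ha; simp only [Finset.mem_Icc] at *; omega
    · intro a ha; rfl
  have key : 2 * H (p - 1) = q * Q := by
    have h1 : 2 * H (p - 1) = ∑ k ∈ Finset.Icc 1 (p - 1),
        ((1 : ℚ) / (k : ℚ) + 1 / ((p - k : ℕ) : ℚ)) := by
      rw [Finset.sum_add_distrib, hrev, H]
      ring
    rw [h1, hQdef, Finset.mul_sum]
    apply Finset.sum_congr rfl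
    intro k hk
    simp only [Finset.mem_Icc] at hk
    have hkp : k < p := by omega
    have hc1 : ((p - k : ℕ) : ℚ) = q - k := by
      push_cast [Nat.cast_sub (le_of_lt hkp)]; ring
    have hc2 : ((k * (p - k) : ℕ) : ℚ) = (k : ℚ) * (q - k) := by
      push_cast [Nat.cast_sub (le_of_lt hkp)]; ring
    have hk0 : (k : ℚ) ≠ 0 := by
      have : (0 : ℚ) < k := by exact_mod_cast (by omega : 0 < k)
      linarith
    have hpk0 : q - (k : ℚ) ≠ 0 := by
      have : (k : ℚ) < q := by
        rw [hqdef]; exact_mod_cast hkp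
      linarith
    rw [hc1, hc2]
    field_simp
    try ring
  have hA : H (p - 1) = q * Q / 2 := by linarith
  -- the inverse map mod p
  set g : ℕ → ℕ := fun k => ((k : ZMod p)⁻¹).val with hgdef
  have hmem : ∀ k ∈ Finset.Icc 1 (p - 1), (k : ZMod p) ≠ 0 := by
    intro k hk
    simp only [Finset.mem_Icc] at hk
    rw [Ne, ZMod.natCast_eq_zero_iff]
    intro h
    have := Nat.le_of_dvd (by omega) h
    omega
  have hginv : ∀ k ∈ Finset.Icc 1 (p - 1), ((g k : ℕ) : ZMod p) = (k : ZMod p)⁻¹ := by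
    intro k hk
    simp [hgdef, ZMod.natCast_zmod_val]
  have hgmem : ∀ k ∈ Finset.Icc 1 (p - 1), g k ∈ Finset.Icc 1 (p - 1) := by
    intro k hk
    have hk0 := hmem k hk
    have hne : ((k : ZMod p)⁻¹) ≠ 0 := inv_ne_zero hk0
    have hval : ((k : ZMod p)⁻¹).val < p := ZMod.val_lt _
    have hval0 : ((k : ZMod p)⁻¹).val ≠ 0 := fun h => hne ((ZMod.val_eq_zero _).mp h)
    simp only [Finset.mem_Icc, hgdef]
    omega
  have hgg : ∀ k ∈ Finset.Icc 1 (p - 1), g (g k) = k := by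
    intro k hk
    simp only [Finset.mem_Icc] at hk
    have h1 : ((g k : ℕ) : ZMod p) = (k : ZMod p)⁻¹ := hginv k (by simp [Finset.mem_Icc]; omega)
    have : ((g (g k) : ℕ) : ZMod p) = ((g k : ZMod p))⁻¹ :=
      hginv (g k) (hgmem k (by simp [Finset.mem_Icc]; omega))
    rw [h1] at this
    rw [inv_inv] at this
    have hlt : k < p := by omega
    have hglt : g (g k) < p := ZMod.val_lt _
    have := this
    rwa [ZMod.natCast_eq_natCast_iff', Nat.mod_eq_of_lt hglt, Nat.mod_eq_of_lt hlt] at this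
  have hmul1 : ∀ k ∈ Finset.Icc 1 (p - 1), ((k * g k : ℕ) : ZMod p) = 1 := by
    intro k hk
    push_cast
    rw [hginv k hk, mul_inv_cancel₀ (hmem k hk)]
  -- B := ∑ 1/k²
  set B : ℚ := ∑ k ∈ Finset.Icc 1 (p - 1), 1 / ((k : ℚ)) ^ 2 with hBdef
  -- the reflected squares sum
  have hsqrev : ∑ k ∈ Finset.Icc 1 (p - 1), ((g k : ℕ) : ℚ) ^ 2
      = ∑ k ∈ Finset.Icc 1 (p - 1), (k : ℚ) ^ 2 := by
    refine Finset.sum_nbij' g g hgmem hgmem hgg hgg ?_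
    intro a ha; rfl
  have hBpd : PD p B := by
    have hsplit : B = (∑ k ∈ Finset.Icc 1 (p - 1),
        (1 / ((k : ℚ)) ^ 2 - ((g k : ℕ) : ℚ) ^ 2))
        + ∑ k ∈ Finset.Icc 1 (p - 1), (k : ℚ) ^ 2 := by
      rw [← hsqrev, hBdef, ← Finset.sum_add_distrib]
      apply Finset.sum_congr rfl
      intro k _; ring
    rw [hsplit]
    apply pd_add hp
    · apply pd_sum hp
      intro k hk
      simp only [Finset.mem_Icc] at hk
      -- p ∣ 1 - (k * g k)²
      have hd : ((1 - ((k * g k : ℕ) : ℤ) ^ 2 : ℤ) : ZMod p) = 0 := by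
        push_cast
        rw [show ((k : ZMod p) * (g k : ZMod p)) = ((k * g k : ℕ) : ZMod p) by push_cast; ring]
        rw [hmul1 k (by simp [Finset.mem_Icc]; omega)]
        ring
      obtain ⟨c, hc⟩ := (ZMod.intCast_zmod_eq_zero_iff_dvd _ p).mp hd
      refine ⟨c, (k : ℤ) ^ 2, ?_, ?_⟩
      · intro h
        have hpk : (p : ℤ) ∣ (k : ℤ) :=
          (Nat.prime_iff_prime_int.mp hp).dvd_of_dvd_pow h
        have : (p : ℤ) ≤ (k : ℤ) := Int.le_of_dvd (by exact_mod_cast (by omega : 0 < k)) hpk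
        have : p ≤ k := by exact_mod_cast this
        omega
      · have hk0 : (k : ℚ) ≠ 0 := by
          have : (0 : ℚ) < k := by exact_mod_cast (by omega : 0 < k)
          linarith
        have : (1 / ((k : ℚ)) ^ 2 - ((g k : ℕ) : ℚ) ^ 2) * ((k : ℤ) : ℚ) ^ 2
            = 1 - ((k * g k : ℕ) : ℚ) ^ 2 := by
          push_cast
          field_simp
        rw [show (((k : ℤ) ^ 2 : ℤ) : ℚ) = ((k : ℤ) : ℚ) ^ 2 by push_cast; ring, this]
        have := congrArg (fun z : ℤ => (z : ℚ)) hc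
        push_cast at this ⊢
        linarith
    · rw [sq_sum, hq1]
      have he : (q - 1) * (q - 1 + 1) * (2 * (q - 1) + 1) / 6
          = q * ((((p : ℤ) - 1) * (2 * (p : ℤ) - 1) : ℤ) * (1 / ((6 : ℕ) : ℚ))) := by
        push_cast
        field_simp
        ring
      rw [he]
      apply pd_of_piq_mul
      apply piq_mul hp (piq_intcast hp2 _)
      apply piq_inv_nat
      intro h
      have h6 : p ∣ 2 * 3 := by norm_num; exact h
      rcases (Nat.Prime.dvd_mul hp).mp h6 with h' | h'
      · have := Nat.le_of_dvd (by norm_num) h'; omega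
      · have := Nat.le_of_dvd (by norm_num) h'; omega
  -- Q + B ≡ 0 (mod p)
  have hQBpd : PD p (Q + B) := by
    have hsplit : Q + B = q * ∑ k ∈ Finset.Icc 1 (p - 1),
        1 / ((k * k * (p - k) : ℕ) : ℚ) := by
      rw [hQdef, hBdef, Finset.mul_sum, ← Finset.sum_add_distrib]
      apply Finset.sum_congr rfl
      intro k hk
      simp only [Finset.mem_Icc] at hk
      have hkp : k < p := by omega
      have hc1 : ((k * (p - k) : ℕ) : ℚ) = (k : ℚ) * (q - k) := by
        push_cast [Nat.cast_sub (le_of_lt hkp)]; ring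
      have hc2 : ((k * k * (p - k) : ℕ) : ℚ) = (k : ℚ) * (k : ℚ) * (q - k) := by
        push_cast [Nat.cast_sub (le_of_lt hkp)]; ring
      have hk0 : (k : ℚ) ≠ 0 := by
        have : (0 : ℚ) < k := by exact_mod_cast (by omega : 0 < k)
        linarith
      have hpk0 : q - (k : ℚ) ≠ 0 := by
        have : (k : ℚ) < q := by rw [hqdef]; exact_mod_cast hkp
        linarith
      rw [hc1, hc2]
      field_simp
      try ring
    rw [hsplit]
    apply pd_of_piq_mul
    apply piq_sum hp
    intro k hk
    simp only [Finset.mem_Icc] at hk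
    apply piq_inv_nat
    intro h
    rcases (Nat.Prime.dvd_mul hp).mp h with h | h
    · rcases (Nat.Prime.dvd_mul hp).mp h with h | h
      · have := Nat.le_of_dvd (by omega) h; omega
      · have := Nat.le_of_dvd (by omega) h; omega
    · have := Nat.le_of_dvd (by omega) h; omega
  have hQpd : PD p Q := by
    have : Q = (Q + B) - B := by ring
    rw [this]
    exact pd_sub hp hQBpd hBpd
  -- assemble
  set E : ℚ := (∑ k ∈ Finset.Icc 1 (p - 1), (k : ℚ) * H k ^ 2)
      - (-(5 / 4) * q + 1) with hEdef
  have hE : E = q ^ 3 * (q - 1) * Q ^ 2 / 8 + q * (3 * q - q ^ 2 - 1) * Q / 4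
      + q ^ 2 / 4 := by
    rw [hEdef, T_closed, hq1, hA]
    ring
  obtain ⟨aQ, bQ, hbQ, habQ⟩ := hQpd
  have hQb : Q * (bQ : ℚ) = q * (aQ : ℚ) := by
    rw [habQ]
  set M : ℤ := 2 * bQ ^ 2 + 2 * (3 * (p : ℤ) - (p : ℤ) ^ 2 - 1) * aQ * bQ
      + (p : ℤ) ^ 3 * ((p : ℤ) - 1) * aQ ^ 2 with hMdef
  have hEb : E * ((8 * bQ ^ 2 : ℤ) : ℚ) = (((p : ℤ) ^ 2 * M : ℤ) : ℚ) := by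
    rw [hE, hMdef]
    push_cast
    rw [hqdef]
    linear_combination (((p : ℚ)) ^ 3 * (((p : ℚ)) - 1) * (Q * (bQ : ℚ) + ((p : ℚ)) * (aQ : ℚ))
      + 2 * ((p : ℚ)) * (3 * ((p : ℚ)) - ((p : ℚ)) ^ 2 - 1) * (bQ : ℚ)) * hQb
  -- from E * b = p² * M, conclude p² ∣ E.num
  have hb8 : ¬ (p : ℤ) ∣ 8 * bQ ^ 2 := by
    apply dvd_mul_split hp
    · intro h
      have hpk : (p : ℤ) ∣ 2 := (Nat.prime_iff_prime_int.mp hp).dvd_of_dvd_pow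
        (show (p : ℤ) ∣ 2 ^ 3 by norm_num at h ⊢; exact h)
      have := Int.le_of_dvd (by norm_num) hpk
      omega
    · intro h
      exact hbQ ((Nat.prime_iff_prime_int.mp hp).dvd_of_dvd_pow h)
  have hden0 : ((E.den : ℚ)) ≠ 0 := by exact_mod_cast E.den_ne_zero
  have hnum : (E.num : ℚ) = E * E.den := by
    have h := Rat.num_div_den E
    rw [div_eq_iff hden0] at h
    exact h
  have hcast : ((E.num * (8 * bQ ^ 2) : ℤ) : ℚ) = (((p : ℤ) ^ 2 * (M * E.den) : ℤ) : ℚ) := by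
    push_cast
    rw [hnum]
    calc E * (E.den : ℚ) * (8 * (bQ : ℚ) ^ 2)
        = (E * ((8 * bQ ^ 2 : ℤ) : ℚ)) * E.den := by push_cast; ring
    _ = (((p : ℤ) ^ 2 * M : ℤ) : ℚ) * E.den := by rw [hEb]
    _ = (p : ℚ) ^ 2 * ((M : ℚ) * E.den) := by push_cast; ring
  have hZ : E.num * (8 * bQ ^ 2) = (p : ℤ) ^ 2 * (M * E.den) := by exact_mod_cast hcast
  have hdvd : (p : ℤ) ^ 2 ∣ E.num * (8 * bQ ^ 2) := ⟨M * E.den, hZ⟩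
  have hcop : IsCoprime ((p : ℤ) ^ 2) (8 * bQ ^ 2) := by
    apply IsCoprime.pow_left
    exact (Nat.prime_iff_prime_int.mp hp).coprime_iff_not_dvd.mpr hb8
  exact hcop.dvd_of_dvd_mul_right hdvd
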